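/- Let R be a commutative local ring with maximal ideal m. Then in S = R[[y]], the n-th power of the ideal M = ⟨m, y⟩ satisfies Mⁿ = Σ_{i+j=n} mⁱ · yʲ S, i.e., Mⁿ is the set of power series Σ rⱼ yʲ with rⱼ ∈ m^{n−j} for all j < n. -/

import Mathlib

open PowerSeries

/-- The ideal of power series whose `j`-th coefficient lies in `m ^ (a - j)`. -/
def stmt6I {R : Type*} [CommRing R] (m : Ideal R) (a : ℕ) : Ideal (PowerSeries R) where
  carrier := {f | ∀ j, PowerSeries.coeff j f ∈ m ^ (a - j)}
  add_mem' hf hg j := by rw [map_add]; exact add_mem (hf j) (hg j)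
  zero_mem' j := by simp
  smul_mem' c f hf := by
    intro j
    rw [smul_eq_mul, PowerSeries.coeff_mul]
    refine Ideal.sum_mem _ fun p hp => ?_
    have hj := Finset.HasAntidiagonal.mem_antidiagonal.mp hp
    have hle : m ^ (a - p.2) ≤ m ^ (a - j) := Ideal.pow_le_pow_right (by omega)
    exact Ideal.mul_mem_left _ _ (hle (hf p.2))

lemma stmt6I_mul {R : Type*} [CommRing R] (m : Ideal R) (a b : ℕ) :
    stmt6I m a * stmt6I m b ≤ stmt6I m (a + b) := by
  rw [Ideal.mul_le]
  intro f hf g hg j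
  rw [PowerSeries.coeff_mul]
  refine Ideal.sum_mem _ fun p hp => ?_
  have hj := Finset.HasAntidiagonal.mem_antidiagonal.mp hp
  have hle : m ^ (a - p.1) * m ^ (b - p.2) ≤ m ^ (a + b - j) := by
    rw [← pow_add]
    exact Ideal.pow_le_pow_right (by omega)
  exact hle (Ideal.mul_mem_mul (hf p.1) (hg p.2))

/-- In `S = R[[y]]` over a commutative local ring `R` with maximal ideal `m`, the `n`-th
power of `M = ⟨m, y⟩` consists exactly of the power series `Σ rⱼ yʲ` with `rⱼ ∈ m^(n-j)`
for all `j < n`. -/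
theorem stmt6 (R : Type*) [CommRing R] [IsLocalRing R] (n : ℕ) (f : PowerSeries R) :
    f ∈ (Ideal.span (PowerSeries.C '' (IsLocalRing.maximalIdeal R) ∪ {PowerSeries.X})) ^ n ↔
      ∀ j < n, PowerSeries.coeff j f ∈ (IsLocalRing.maximalIdeal R) ^ (n - j) := by
  set m := IsLocalRing.maximalIdeal R with hm
  set M := Ideal.span (PowerSeries.C '' (m : Set R) ∪ {PowerSeries.X}) with hM
  constructor
  · -- forward direction
    have hbase : M ≤ stmt6I m 1 := by
      rw [Ideal.span_le]
      rintro g (⟨r, hr, rfl⟩ | hg)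
      · intro j
        rw [PowerSeries.coeff_C]
        split
        · rename_i h; subst h; simpa using hr
        · exact zero_mem _
      · simp only [Set.mem_singleton_iff] at hg
        subst hg
        intro j
        rw [PowerSeries.coeff_X]
        split
        · rename_i h; subst h; simp
        · exact zero_mem _
    have key : ∀ k, M ^ k ≤ stmt6I m k := by
      intro k
      induction k with
      | zero => intro g _ j; simp
      | succ k ih =>
        rw [pow_succ]
        exact le_trans (Ideal.mul_mono ih hbase) (stmt6I_mul m k 1)
    exact fun hf j _ => key n hf j
  · -- reverse direction
    have hCle : Ideal.map (PowerSeries.C) m ≤ M := by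
      rw [Ideal.map_le_iff_le_comap]
      intro r hr
      exact Ideal.subset_span (Or.inl ⟨r, hr, rfl⟩)
    have hX : (PowerSeries.X : PowerSeries R) ∈ M :=
      Ideal.subset_span (Or.inr rfl)
    clear_value M
    induction n generalizing f with
    | zero => intro _; simp
    | succ k ih =>
      intro hf
      have hdecomp := PowerSeries.eq_shift_mul_X_add_const f
      rw [hdecomp]
      apply Ideal.add_mem
      · rw [pow_succ]
        refine Ideal.mul_mem_mul (ih _ fun j hj => ?_) hX
        rw [PowerSeries.coeff_mk]
        have := hf (j + 1) (by omega)
        simpa using this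
      · have hc : PowerSeries.constantCoeff f ∈ m ^ (k + 1) := by
          simpa using hf 0 (by omega)
        have : PowerSeries.C (PowerSeries.constantCoeff f) ∈
            Ideal.map (PowerSeries.C) (m ^ (k + 1)) :=
          Ideal.mem_map_of_mem _ hc
        rw [Ideal.map_pow] at this
        exact (Ideal.pow_right_mono hCle (k + 1)) this
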